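/- For -1 ≤ λ ≤ 3, the function r(t) = (1+λ) - 4λ t + 3λ t² is nonnegative for all t ∈ [0,1]. -/
import Mathlib

theorem stmt_10 (lam : ℝ) (h1 : -1 ≤ lam) (h2 : lam ≤ 3) :
    ∀ t ∈ Set.Icc (0:ℝ) 1, 0 ≤ (1 + lam) - 4 * lam * t + 3 * lam * t ^ 2 := by
  rintro t ⟨ht0, ht1⟩
  nlinarith [sq_nonneg (3*t - 2), mul_nonneg ht0 (sub_nonneg.2 ht1), sq_nonneg t, sq_nonneg (t-1), mul_nonneg (mul_nonneg ht0 ht0) (sub_nonneg.2 ht1)]
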